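/- arXiv:1907.10592 — 4 statements merged into one kernel-verified Lean document; each statement's English description precedes it below -/
import Mathlib

section
/- For the function g(x) = sin(x)/x (extended by g(0)=1), the first derivative satisfies g'(x) = (x cos x - sin x)/x² for x ≠ 0, and |g'(x)| ≤ 1/2 for all real x. -/
open Real Filter

lemma key_bound : ∀ x : ℝ, |x * Real.cos x - Real.sin x| ≤ x ^ 2 / 2 := by
  have main : ∀ x : ℝ, 0 ≤ x → |x * Real.cos x - Real.sin x| ≤ x ^ 2 / 2 := by
    intro x hx
    have mono : ∀ ε : ℝ, ε = 1 ∨ ε = -1 →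
        MonotoneOn (fun s : ℝ => s ^ 2 / 2 + ε * (s * Real.cos s - Real.sin s)) (Set.Ici 0) := by
      intro ε hε
      apply monotoneOn_of_deriv_nonneg (convex_Ici 0)
      · fun_prop
      · fun_prop
      · intro s hs
        rw [interior_Ici] at hs
        have hd : HasDerivAt (fun s : ℝ => s ^ 2 / 2 + ε * (s * Real.cos s - Real.sin s))
            (s + ε * ((Real.cos s + s * (-Real.sin s)) - Real.cos s)) s := by
          have h1 : HasDerivAt (fun s : ℝ => s * Real.cos s)
              (1 * Real.cos s + s * (-Real.sin s)) s :=
            (hasDerivAt_id s).mul (Real.hasDerivAt_cos s)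
          have h2 := (h1.sub (Real.hasDerivAt_sin s)).const_mul ε
          have h3 : HasDerivAt (fun s : ℝ => s ^ 2 / 2) s s := by
            simpa using ((hasDerivAt_pow 2 s).div_const 2)
          exact (h3.add h2).congr_deriv (by ring)
        rw [hd.deriv]
        have hsin : |Real.sin s| ≤ 1 := Real.abs_sin_le_one s
        rcases hε with h | h <;> subst h <;> nlinarith [abs_le.1 hsin, (Set.mem_Ioi.mp hs).le]
    have h0 : (0:ℝ) ∈ Set.Ici (0:ℝ) := Set.mem_Ici.2 le_rfl
    have hx' : x ∈ Set.Ici (0:ℝ) := Set.mem_Ici.2 hx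
    have h1 := mono 1 (Or.inl rfl) h0 hx' hx
    have h2 := mono (-1) (Or.inr rfl) h0 hx' hx
    simp only [Real.cos_zero, Real.sin_zero] at h1 h2
    rw [abs_le]; constructor <;> nlinarith
  intro x
  rcases le_or_gt 0 x with hx | hx
  · exact main x hx
  · have := main (-x) (by linarith)
    rw [Real.cos_neg, Real.sin_neg] at this
    rw [show (-x) * Real.cos x - -Real.sin x = -(x * Real.cos x - Real.sin x) by ring,
      abs_neg, neg_sq] at this
    exact this

lemma sin_sub_bound : ∀ x : ℝ, |x - Real.sin x| ≤ |x| ^ 3 / 6 := by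
  have main : ∀ x : ℝ, 0 ≤ x → x - Real.sin x ≤ x ^ 3 / 6 := by
    intro x hx
    have mono : MonotoneOn (fun s : ℝ => s ^ 3 / 6 - (s - Real.sin s)) (Set.Ici 0) := by
      apply monotoneOn_of_deriv_nonneg (convex_Ici 0)
      · fun_prop
      · fun_prop
      · intro s hs
        rw [interior_Ici] at hs
        have hd : HasDerivAt (fun s : ℝ => s ^ 3 / 6 - (s - Real.sin s))
            (3 * s ^ 2 / 6 - (1 - Real.cos s)) s := by
          have h3 : HasDerivAt (fun s : ℝ => s ^ 3 / 6) (3 * s ^ 2 / 6) s := by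
            simpa using ((hasDerivAt_pow 3 s).div_const 6)
          exact h3.sub ((hasDerivAt_id s).sub (Real.hasDerivAt_sin s))
        rw [hd.deriv]
        have := Real.one_sub_sq_div_two_le_cos (x := s)
        nlinarith
    have h0 : (0:ℝ) ∈ Set.Ici (0:ℝ) := Set.mem_Ici.2 le_rfl
    have := mono h0 (Set.mem_Ici.2 hx) hx
    simp only [Real.sin_zero] at this
    nlinarith
  intro x
  rcases le_or_gt 0 x with hx | hx
  · rw [abs_of_nonneg hx, abs_of_nonneg (by nlinarith [Real.sin_le hx])]
    exact main x hx
  · have h := main (-x) (by linarith)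
    rw [Real.sin_neg] at h
    have hge : Real.sin x ≤ x → False := fun hle => by
      nlinarith [Real.lt_sin hx]
    rw [abs_of_neg hx, abs_of_neg (by nlinarith [Real.lt_sin hx])]
    nlinarith

/-- For `g(x) = sin(x)/x` (with `g(0) = 1`), the derivative satisfies
`g'(x) = (x cos x - sin x)/x²` for `x ≠ 0`, and `|g'(x)| ≤ 1/2` for all `x`. -/
theorem sinc_deriv_formula_and_bound
    (g : ℝ → ℝ) (hg : ∀ x, g x = if x = 0 then 1 else Real.sin x / x) :
    (∀ x : ℝ, x ≠ 0 →
      deriv g x = (x * Real.cos x - Real.sin x) / x ^ 2) ∧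
    (∀ x : ℝ, |deriv g x| ≤ 1 / 2) := by
  have hformula : ∀ x : ℝ, x ≠ 0 →
      deriv g x = (x * Real.cos x - Real.sin x) / x ^ 2 := by
    intro x hx
    have hev : g =ᶠ[nhds x] fun y => Real.sin y / y := by
      filter_upwards [isOpen_ne.mem_nhds (show x ∈ {y : ℝ | y ≠ 0} from hx)] with y hy
      simp [hg y, hy]
    rw [hev.deriv_eq]
    have hd : HasDerivAt (fun y => Real.sin y / y)
        ((Real.cos x * x - Real.sin x * 1) / x ^ 2) x :=
      (Real.hasDerivAt_sin x).div (hasDerivAt_id x) hx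
    rw [hd.deriv]; ring_nf
  refine ⟨hformula, ?_⟩
  have hzero : deriv g 0 = 0 := by
    have hda : HasDerivAt g 0 0 := by
      rw [hasDerivAt_iff_tendsto_slope]
      have hle : ∀ᶠ x in nhdsWithin (0:ℝ) {(0:ℝ)}ᶜ, ‖slope g 0 x‖ ≤ |x| / 6 := by
        filter_upwards [self_mem_nhdsWithin] with x hx
        have hx : x ≠ (0:ℝ) := hx
        have hb := sin_sub_bound x
        have hxpos : (0:ℝ) < |x| := abs_pos.2 hx
        rw [slope_def_field, hg x, hg 0, if_neg hx, if_pos rfl]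
        have heq : (Real.sin x / x - 1) / (x - 0) = -((x - Real.sin x) / x ^ 2) := by
          rw [sub_zero, div_sub_one hx, div_div, ← neg_sub x (Real.sin x), neg_div, ← sq]
        rw [heq, norm_neg, norm_div, norm_eq_abs, norm_eq_abs, abs_pow, sq_abs,
          div_le_div_iff₀ (by positivity) (by norm_num)]
        calc |x - Real.sin x| * 6 ≤ (|x| ^ 3 / 6) * 6 := by linarith
          _ = |x| * x ^ 2 := by rw [← sq_abs]; ring
      have htend : Tendsto (fun x : ℝ => |x| / 6) (nhdsWithin (0:ℝ) {(0:ℝ)}ᶜ) (nhds 0) := by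
        have : Tendsto (fun x : ℝ => |x| / 6) (nhds 0) (nhds 0) := by
          simpa using ((continuous_abs.tendsto (0:ℝ)).div_const 6)
        exact this.mono_left nhdsWithin_le_nhds
      exact squeeze_zero_norm' hle htend
    exact hda.deriv
  intro x
  rcases eq_or_ne x 0 with rfl | hx
  · rw [hzero]; norm_num
  · rw [hformula x hx, abs_div, abs_pow, sq_abs]
    have hx2 : (0:ℝ) < x ^ 2 := by positivity
    rw [div_le_iff₀ hx2]
    calc |x * Real.cos x - Real.sin x| ≤ x ^ 2 / 2 := key_bound x
      _ = 1 / 2 * x ^ 2 := by ring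
end

section
/- For the sinus cardinal function g(x) = sin(x)/x, the second derivative satisfies g''(x) = -((x²-2) sin x + 2x cos x)/x³ for x ≠ 0, and |g''(x)| ≤ 1/2 for all real x. -/
open Real intervalIntegral MeasureTheory Metric

private lemma sinc_d1 (x₀ : ℝ) : HasDerivAt (fun x => ∫ t in (0:ℝ)..1, Real.cos (t * x))
    (∫ t in (0:ℝ)..1, -(t * Real.sin (t * x₀))) x₀ := by
  have := (intervalIntegral.hasDerivAt_integral_of_dominated_loc_of_deriv_le
    (F := fun x t => Real.cos (t * x)) (F' := fun x t => -(t * Real.sin (t * x)))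
    (x₀ := x₀) (a := 0) (b := 1) (bound := fun _ => 1) (μ := volume) (s := Metric.ball x₀ 1) (Metric.ball_mem_nhds x₀ one_pos)
    ?_ ?_ ?_ ?_ ?_ ?_).2
  · exact this
  · filter_upwards with x using (Continuous.aestronglyMeasurable (by continuity)).restrict
  · exact (Continuous.intervalIntegrable (by continuity) 0 1)
  · exact (Continuous.aestronglyMeasurable (by continuity)).restrict
  · filter_upwards with t
    intro ht x _
    have ht' : t ∈ Set.Ioc (0:ℝ) 1 := by simpa [Set.uIoc_of_le (by norm_num : (0:ℝ) ≤ 1)] using ht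
    have : |t| ≤ 1 := by rw [abs_of_pos ht'.1]; exact ht'.2
    calc ‖-(t * Real.sin (t * x))‖ = |t| * |Real.sin (t * x)| := by
          rw [norm_neg, Real.norm_eq_abs, abs_mul]
      _ ≤ 1 * 1 := mul_le_mul this (Real.abs_sin_le_one _) (abs_nonneg _) one_pos.le
      _ = 1 := by ring
  · exact (Continuous.intervalIntegrable (by continuity) 0 1)
  · filter_upwards with t
    intro ht x _
    have h : HasDerivAt (fun x => t * x) t x := by simpa using (hasDerivAt_id x).const_mul t
    have := (Real.hasDerivAt_cos (t * x)).comp x h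
    have h2 : -Real.sin (t * x) * t = -(t * Real.sin (t * x)) := by ring
    exact h2 ▸ this

private lemma sinc_d2 (x₀ : ℝ) : HasDerivAt (fun x => ∫ t in (0:ℝ)..1, -(t * Real.sin (t * x)))
    (∫ t in (0:ℝ)..1, -(t ^ 2 * Real.cos (t * x₀))) x₀ := by
  have := (intervalIntegral.hasDerivAt_integral_of_dominated_loc_of_deriv_le
    (F := fun x t => -(t * Real.sin (t * x))) (F' := fun x t => -(t ^ 2 * Real.cos (t * x)))
    (x₀ := x₀) (a := 0) (b := 1) (bound := fun _ => 1) (μ := volume) (s := Metric.ball x₀ 1) (Metric.ball_mem_nhds x₀ one_pos)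
    ?_ ?_ ?_ ?_ ?_ ?_).2
  · exact this
  · filter_upwards with x using (Continuous.aestronglyMeasurable (by continuity)).restrict
  · exact (Continuous.intervalIntegrable (by continuity) 0 1)
  · exact (Continuous.aestronglyMeasurable (by continuity)).restrict
  · filter_upwards with t
    intro ht x _
    have ht' : t ∈ Set.Ioc (0:ℝ) 1 := by simpa [Set.uIoc_of_le (by norm_num : (0:ℝ) ≤ 1)] using ht
    have h1 : |t ^ 2| ≤ 1 := by
      rw [abs_of_nonneg (sq_nonneg t), ← one_pow 2]
      exact pow_le_pow_left₀ ht'.1.le ht'.2 2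
    calc ‖-(t ^ 2 * Real.cos (t * x))‖ = |t ^ 2| * |Real.cos (t * x)| := by
          rw [norm_neg, Real.norm_eq_abs, abs_mul]
      _ ≤ 1 * 1 := mul_le_mul h1 (Real.abs_cos_le_one _) (abs_nonneg _) one_pos.le
      _ = 1 := by ring
  · exact (Continuous.intervalIntegrable (by continuity) 0 1)
  · filter_upwards with t
    intro ht x _
    have h : HasDerivAt (fun x => t * x) t x := by simpa using (hasDerivAt_id x).const_mul t
    have := (((Real.hasDerivAt_sin (t * x)).comp x h).const_mul t).neg
    have h2 : -(t * (Real.cos (t * x) * t)) = -(t ^ 2 * Real.cos (t * x)) := by ring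
    exact h2 ▸ this

private lemma sinc_rep (g : ℝ → ℝ) (hg : ∀ x, g x = if x = 0 then 1 else Real.sin x / x) :
    g = fun x => ∫ t in (0:ℝ)..1, Real.cos (t * x) := by
  funext x
  rw [hg]
  split_ifs with h
  · simp [h]
  · rw [intervalIntegral.integral_comp_mul_right Real.cos h]
    simp [integral_cos, smul_eq_mul, div_eq_inv_mul]

private lemma sinc_iter2 (g : ℝ → ℝ) (hg : ∀ x, g x = if x = 0 then 1 else Real.sin x / x)
    (x : ℝ) : iteratedDeriv 2 g x = ∫ t in (0:ℝ)..1, -(t ^ 2 * Real.cos (t * x)) := by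
  have hrep := sinc_rep g hg
  have hd : deriv g = fun x => ∫ t in (0:ℝ)..1, -(t * Real.sin (t * x)) := by
    funext y
    rw [hrep]
    exact (sinc_d1 y).deriv
  rw [show (2:ℕ) = 1 + 1 from rfl, iteratedDeriv_succ, iteratedDeriv_one, hd]
  exact (sinc_d2 x).deriv

/-- For the sinus cardinal function `g(x) = sin(x)/x` (with `g(0) = 1`), the second
derivative satisfies `g''(x) = -((x²-2) sin x + 2x cos x)/x³` for `x ≠ 0`, and
`|g''(x)| ≤ 1/2` for all real `x`. -/
theorem sinc_second_deriv_formula_and_bound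
    (g : ℝ → ℝ) (hg : ∀ x, g x = if x = 0 then 1 else Real.sin x / x) :
    (∀ x : ℝ, x ≠ 0 →
      iteratedDeriv 2 g x = -((x ^ 2 - 2) * Real.sin x + 2 * x * Real.cos x) / x ^ 3) ∧
    (∀ x : ℝ, |iteratedDeriv 2 g x| ≤ 1 / 2) := by
  constructor
  · intro x hx
    rw [sinc_iter2 g hg x]
    -- integrate by parts: antiderivative of t ↦ -(t^2 cos(t x))
    have key : ∀ t : ℝ, HasDerivAt
        (fun t => -(((t ^ 2 * x ^ 2 - 2) * Real.sin (t * x) + 2 * t * x * Real.cos (t * x)) / x ^ 3))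
        (-(t ^ 2 * Real.cos (t * x))) t := by
      intro t
      have hmx : HasDerivAt (fun t : ℝ => t * x) x t := hasDerivAt_mul_const x
      have hs : HasDerivAt (fun t => Real.sin (t * x)) (Real.cos (t * x) * x) t := by
        have := (Real.hasDerivAt_sin (t * x)).comp t hmx; exact this
      have hc : HasDerivAt (fun t => Real.cos (t * x)) (-Real.sin (t * x) * x) t := by
        have := (Real.hasDerivAt_cos (t * x)).comp t hmx; exact this
      have hp1 : HasDerivAt (fun t : ℝ => t ^ 2 * x ^ 2 - 2) (2 * t * x ^ 2) t := by
        simpa [mul_comm, mul_assoc] using (((hasDerivAt_pow 2 t).mul_const (x ^ 2)).sub_const 2)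
      have hp2 : HasDerivAt (fun t : ℝ => 2 * t * x) (2 * x) t := by
        simpa [mul_assoc] using (hasDerivAt_mul_const x).const_mul 2
      have := (((hp1.mul hs).add (hp2.mul hc)).div_const (x ^ 3)).neg
      refine this.congr_deriv ?_
      field_simp
      ring
    rw [intervalIntegral.integral_eq_sub_of_hasDerivAt (fun t _ => key t)
      ((Continuous.intervalIntegrable (by continuity) 0 1))]
    field_simp
    simp
  · intro x
    rw [sinc_iter2 g hg x]
    have h1 : |∫ t in (0:ℝ)..1, -(t ^ 2 * Real.cos (t * x))| ≤ |∫ t in (0:ℝ)..1, t ^ 2| := by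
      rw [← Real.norm_eq_abs]
      apply intervalIntegral.norm_integral_le_abs_of_norm_le
        (g := fun t => t ^ 2)
      · apply Filter.Eventually.of_forall
        intro t
        calc ‖-(t ^ 2 * Real.cos (t * x))‖ = t ^ 2 * |Real.cos (t * x)| := by
              rw [norm_neg, Real.norm_eq_abs, abs_mul, abs_of_nonneg (sq_nonneg t)]
          _ ≤ t ^ 2 * 1 := by
              exact mul_le_mul_of_nonneg_left (Real.abs_cos_le_one _) (sq_nonneg t)
          _ = t ^ 2 := by ring
      · exact (Continuous.intervalIntegrable (by continuity) 0 1)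
    have h2 : (∫ t in (0:ℝ)..1, t ^ 2) = 1 / 3 := by
      simp [integral_pow]
      norm_num
    rw [h2] at h1
    rw [abs_of_pos (by norm_num : (0:ℝ) < 1/3)] at h1
    linarith
end

section
/- If two solutions μ₁ and μ₂ both minimize the functional μ ↦ (1/2)‖y − Aμ‖² + κ‖μ‖₁ over a normed space, where A is a linear map into a Hilbert space and κ > 0, then Aμ₁ = Aμ₂; i.e., the 'prediction' Aμ̂ is uniquely determined by any minimizer. -/
/-- If `μ₁` and `μ₂` both minimize `μ ↦ (1/2)‖y − Aμ‖² + κ‖μ‖` over a normed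
space, where `A` is linear into a Hilbert space and `κ > 0`, then `Aμ₁ = Aμ₂`. -/
theorem prediction_unique_of_minimizers
    {X : Type*} [NormedAddCommGroup X] [NormedSpace ℝ X]
    {H : Type*} [NormedAddCommGroup H] [InnerProductSpace ℝ H] [CompleteSpace H]
    (A : X →ₗ[ℝ] H) (y : H) (κ : ℝ) (hκ : 0 < κ)
    (F : X → ℝ) (hF : ∀ μ, F μ = (1 / 2) * ‖y - A μ‖ ^ 2 + κ * ‖μ‖)
    (μ₁ μ₂ : X) (h₁ : ∀ μ, F μ₁ ≤ F μ) (h₂ : ∀ μ, F μ₂ ≤ F μ) :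
    A μ₁ = A μ₂ := by
  set a : H := y - A μ₁ with ha
  set b : H := y - A μ₂ with hb
  set m : X := (2:ℝ)⁻¹ • (μ₁ + μ₂) with hm
  have hAm : y - A m = (2:ℝ)⁻¹ • (a + b) := by
    simp only [hm, ha, hb, map_smul, map_add]
    module
  have hnm : ‖y - A m‖ ^ 2 = (1/4) * ‖a + b‖ ^ 2 := by
    rw [hAm, norm_smul]
    simp [norm_inv]
    ring
  have hpar : ‖a + b‖ * ‖a + b‖ + ‖a - b‖ * ‖a - b‖ = 2 * (‖a‖ * ‖a‖ + ‖b‖ * ‖b‖) :=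
    by have h := parallelogram_law_with_norm ℝ a b; simp only [sq] at h; exact h
  have hnormm : ‖m‖ ≤ (1/2) * (‖μ₁‖ + ‖μ₂‖) := by
    rw [hm, norm_smul]
    have := norm_add_le μ₁ μ₂
    simp only [norm_inv, Real.norm_ofNat]
    nlinarith
  have h12 : F μ₁ = F μ₂ := le_antisymm (h₁ μ₂) (h₂ μ₁)
  have hmin : F μ₁ ≤ F m := h₁ m
  have e1 := hF μ₁
  have e2 := hF μ₂
  have em := hF m
  rw [hnm] at em
  have habz : ‖a - b‖ ^ 2 ≤ 0 := by nlinarith [norm_nonneg (a - b)]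
  have : ‖a - b‖ = 0 := by nlinarith [norm_nonneg (a - b)]
  have hab : a = b := sub_eq_zero.mp (norm_eq_zero.mp this)
  rw [ha, hb] at hab
  exact sub_right_injective hab
end

section
/- Let μ⁰ = ∑_{k=1}^K a_k⁰ δ_{t_k} with a_k⁰ > 0 and distinct points t_k ∈ ℝᵈ, and suppose P : ℝᵈ → ℝ is continuous with P(t_k)=1 for all k, |P(t)|<1 for t ∉ {t_1,…,t_K}. If μ̂ is a finite signed measure with ‖μ̂‖₁ ≤ ‖μ⁰‖₁ and ∫ P dμ̂ = ‖μ⁰‖₁, then ‖μ̂‖₁ = ‖μ⁰‖₁ and the support of μ̂ is contained in {t_1,…,t_K}. -/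
open MeasureTheory
open scoped BigOperators

/-- Let `μ⁰ = ∑_k a_k δ_{t_k}` with `a_k > 0` and distinct `t_k`, and `P` continuous with
`P(t_k) = 1` and `|P| < 1` off `{t_1,…,t_K}`. If a finite signed measure `μ̂` satisfies
`‖μ̂‖₁ ≤ ‖μ⁰‖₁` and `∫ P dμ̂ = ‖μ⁰‖₁`, then `‖μ̂‖₁ = ‖μ⁰‖₁` and the support of `μ̂`
is contained in `{t_1,…,t_K}`. -/
theorem support_inclusion_from_certificate {d K : ℕ}
    (a : Fin K → ℝ) (ha : ∀ k, 0 < a k)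
    (t : Fin K → EuclideanSpace ℝ (Fin d)) (ht : Function.Injective t)
    (P : EuclideanSpace ℝ (Fin d) → ℝ) (hPc : Continuous P)
    (hP1 : ∀ k, P (t k) = 1)
    (hPlt : ∀ x, x ∉ Set.range t → |P x| < 1)
    (s : SignedMeasure (EuclideanSpace ℝ (Fin d)))
    (hTV : (s.totalVariation Set.univ).toReal ≤ ∑ k, a k)
    (hint : (∫ x, P x ∂s.toJordanDecomposition.posPart)
          - (∫ x, P x ∂s.toJordanDecomposition.negPart) = ∑ k, a k) :
    (s.totalVariation Set.univ).toReal = ∑ k, a k ∧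
    s.totalVariation (Set.range t)ᶜ = 0 := by
  set μp := s.toJordanDecomposition.posPart with hμp
  set μn := s.toJordanDecomposition.negPart with hμn
  have hb : ∀ x, |P x| ≤ 1 := by
    intro x
    by_cases h : x ∈ Set.range t
    · obtain ⟨k, rfl⟩ := h; rw [hP1]; simp
    · exact (hPlt x h).le
  have hintp : Integrable P μp :=
    Integrable.mono' (integrable_const 1) hPc.aestronglyMeasurable
      (Filter.Eventually.of_forall fun x => by simpa using hb x)
  have hintn : Integrable P μn :=
    Integrable.mono' (integrable_const 1) hPc.aestronglyMeasurable
      (Filter.Eventually.of_forall fun x => by simpa using hb x)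
  have h1 : ∫ x, P x ∂μp ≤ ∫ x, |P x| ∂μp :=
    integral_mono hintp hintp.abs fun x => le_abs_self _
  have h2 : -∫ x, P x ∂μn ≤ ∫ x, |P x| ∂μn := by
    rw [← integral_neg]
    exact integral_mono hintn.neg hintn.abs fun x => neg_le_abs _
  have h3 : ∫ x, |P x| ∂μp ≤ (μp Set.univ).toReal := by
    have := integral_mono hintp.abs (integrable_const 1) fun x => hb x
    simpa [integral_const, smul_eq_mul, Measure.real] using this
  have h4 : ∫ x, |P x| ∂μn ≤ (μn Set.univ).toReal := by
    have := integral_mono hintn.abs (integrable_const 1) fun x => hb x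
    simpa [integral_const, smul_eq_mul, Measure.real] using this
  have htot : (s.totalVariation Set.univ).toReal
      = (μp Set.univ).toReal + (μn Set.univ).toReal := by
    rw [SignedMeasure.totalVariation, Measure.add_apply,
      ENNReal.toReal_add (measure_ne_top _ _) (measure_ne_top _ _)]
  have hchain : ∑ k, a k ≤ ∫ x, |P x| ∂μp + ∫ x, |P x| ∂μn := by
    rw [← hint]; linarith
  have hchain2 : ∫ x, |P x| ∂μp + ∫ x, |P x| ∂μn ≤ (s.totalVariation Set.univ).toReal := by
    rw [htot]; linarith
  have heq1 : (s.totalVariation Set.univ).toReal = ∑ k, a k := le_antisymm hTV (hchain.trans hchain2)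
  have heqInt : ∫ x, |P x| ∂μp + ∫ x, |P x| ∂μn = (μp Set.univ).toReal + (μn Set.univ).toReal := by
    rw [← htot]; linarith
  -- each integral of 1 - |P| is nonneg, and they sum to zero
  have hintabsP : ∫ x, |P x| ∂μp = (μp Set.univ).toReal := by linarith
  have hintabsN : ∫ x, |P x| ∂μn = (μn Set.univ).toReal := by linarith
  have hker : ∀ (μ : Measure (EuclideanSpace ℝ (Fin d))) [IsFiniteMeasure μ],
      Integrable P μ → ∫ x, |P x| ∂μ = (μ Set.univ).toReal →
      μ {x | |P x| < 1} = 0 := by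
    intro μ _ hI hIeq
    have hzero : ∫ x, (1 - |P x|) ∂μ = 0 := by
      rw [integral_sub (integrable_const 1) hI.abs]
      simp [integral_const, hIeq, Measure.real]
    have hnn : 0 ≤ fun x => 1 - |P x| := fun x => by simpa using hb x
    have hae : (fun x => 1 - |P x|) =ᵐ[μ] 0 :=
      (integral_eq_zero_iff_of_nonneg hnn ((integrable_const 1).sub hI.abs)).mp hzero
    have hnull : μ {x | (1 - |P x|) ≠ 0} = 0 := by
      simpa [Filter.EventuallyEq, ae_iff] using hae
    refine measure_mono_null ?_ hnull
    intro x hx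
    simp only [Set.mem_setOf_eq] at hx ⊢
    intro h
    linarith
  have hp0 : μp {x | |P x| < 1} = 0 := hker μp hintp hintabsP
  have hn0 : μn {x | |P x| < 1} = 0 := hker μn hintn hintabsN
  refine ⟨heq1, ?_⟩
  have hsub : (Set.range t)ᶜ ⊆ {x | |P x| < 1} := fun x hx => hPlt x hx
  have : s.totalVariation {x | |P x| < 1} = 0 := by
    rw [SignedMeasure.totalVariation, Measure.add_apply, hp0, hn0, add_zero]
  exact measure_mono_null hsub this
end
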